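/- Let v ≥ 1 and k ≥ 0 be integers, set d = v(k+1) − 1, and let Λ be a finite subgroup of (ℝ/ℤ)^{d+1} having δ-polynomial 1 + t^{k+1} + t^{2(k+1)} + ⋯ + t^{(v−1)(k+1)}. Then Λ is the cyclic subgroup of (ℝ/ℤ)^{d+1} generated by the element (1/v, 1/v, …, 1/v). -/

import Mathlib

open scoped BigOperators

local instance : Fact ((0:ℝ) < 1) := ⟨one_pos⟩

noncomputable def fracR (x : AddCircle (1:ℝ)) : ℝ :=
  ((AddCircle.equivIco 1 0) x : ℝ)

noncomputable def ht {ι : Type*} [Fintype ι] (x : ι → AddCircle (1:ℝ)) : ℝ :=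
  ∑ i, fracR (x i)

/-- `Λ` has δ-polynomial `1 + t^step + t^(2*step) + ⋯ + t^((v-1)*step)` :
the height map is a bijection from `Λ` onto `{j*step : 0 ≤ j ≤ v-1}`. -/
def HasDeltaPoly {ι : Type*} [Fintype ι] (v step : ℕ)
    (Λ : Set (ι → AddCircle (1:ℝ))) : Prop :=
  Set.BijOn ht Λ {y : ℝ | ∃ j : ℕ, j < v ∧ y = (j : ℝ) * (step : ℝ)}

def NonPyramidal {ι : Type*} [Fintype ι] (Λ : Set (ι → AddCircle (1:ℝ))) : Prop :=
  ∀ i : ι, ∃ x ∈ Λ, x i ≠ 0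
lemma fracR_coe (x : ℝ) : fracR (x : AddCircle (1:ℝ)) = Int.fract x := by
  have h := AddCircle.coe_equivIco_mk_apply (1:ℝ) x
  simpa [fracR] using h

lemma coe_fracR (z : AddCircle (1:ℝ)) : ((fracR z : ℝ) : AddCircle (1:ℝ)) = z := by
  induction z using QuotientAddGroup.induction_on with
  | H x =>
    rw [fracR_coe, Int.fract, AddCircle.coe_sub]
    have : ((⌊x⌋ : ℝ) : AddCircle (1:ℝ)) = 0 := by
      rw [AddCircle.coe_eq_zero_iff]; exact ⟨⌊x⌋, by simp⟩
    rw [this, sub_zero]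

lemma fracR_nonneg (z : AddCircle (1:ℝ)) : 0 ≤ fracR z := by
  induction z using QuotientAddGroup.induction_on with
  | H x => rw [fracR_coe]; exact Int.fract_nonneg x

lemma fracR_lt_one (z : AddCircle (1:ℝ)) : fracR z < 1 := by
  induction z using QuotientAddGroup.induction_on with
  | H x => rw [fracR_coe]; exact Int.fract_lt_one x

lemma fracR_zero : fracR (0 : AddCircle (1:ℝ)) = 0 := by
  have : ((0:ℝ) : AddCircle (1:ℝ)) = 0 := by simp
  rw [← this, fracR_coe]; simp

lemma fracR_eq_zero_iff (z : AddCircle (1:ℝ)) : fracR z = 0 ↔ z = 0 := by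
  constructor
  · intro h
    have := coe_fracR z
    rw [h] at this
    simpa using this.symm
  · rintro rfl; exact fracR_zero

lemma fracR_coe_of {r : ℝ} (h0 : 0 ≤ r) (h1 : r < 1) :
    fracR (r : AddCircle (1:ℝ)) = r := by
  rw [fracR_coe, Int.fract_eq_self.mpr ⟨h0, h1⟩]

lemma coe_neg_eq (r : ℝ) :
    (-(r : AddCircle (1:ℝ))) = ((1 - r : ℝ) : AddCircle (1:ℝ)) := by
  rw [← AddCircle.coe_neg, ← sub_eq_zero, ← AddCircle.coe_sub,
    show -r - (1 - r) = ((-1 : ℤ) : ℝ) by push_cast; ring,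
    AddCircle.coe_eq_zero_iff]
  exact ⟨-1, by norm_num⟩

lemma fracR_add_neg (z : AddCircle (1:ℝ)) :
    fracR z + fracR (-z) = if z = 0 then 0 else 1 := by
  by_cases h : z = 0
  · simp [h, fracR_zero]
  · rw [if_neg h]
    have hz : ((fracR z : ℝ) : AddCircle (1:ℝ)) = z := coe_fracR z
    have h0 : 0 < fracR z :=
      lt_of_le_of_ne (fracR_nonneg z) (fun e => h ((fracR_eq_zero_iff z).mp e.symm))
    have h1 : fracR z < 1 := fracR_lt_one z
    have hneg : fracR (-z) = 1 - fracR z := by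
      conv_lhs => rw [← hz]
      rw [coe_neg_eq, fracR_coe_of (by linarith) (by linarith)]
    rw [hneg]; ring

lemma exists_nat_of_nsmul_eq_zero {v : ℕ} (hv : 0 < v) (z : AddCircle (1:ℝ))
    (h : v • z = 0) : ∃ a : ℕ, a < v ∧ fracR z = (a : ℝ) / v := by
  have hz : ((fracR z : ℝ) : AddCircle (1:ℝ)) = z := coe_fracR z
  have h2 : (((v : ℝ) * fracR z : ℝ) : AddCircle (1:ℝ)) = 0 := by
    rw [show ((v:ℝ) * fracR z : ℝ) = (v : ℕ) • (fracR z) by simp,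
      AddCircle.coe_nsmul, hz, h]
  rw [AddCircle.coe_eq_zero_iff] at h2
  obtain ⟨m, hm⟩ := h2
  have hm' : (m : ℝ) = (v : ℝ) * fracR z := by simpa using hm
  have hv' : (0:ℝ) < v := by exact_mod_cast hv
  have h0 : (0:ℝ) ≤ m := by
    rw [hm']; exact mul_nonneg (le_of_lt hv') (fracR_nonneg z)
  have h1 : (m : ℝ) < v := by
    rw [hm']
    calc (v:ℝ) * fracR z < (v:ℝ) * 1 := by
          exact mul_lt_mul_of_pos_left (fracR_lt_one z) hv'
      _ = v := mul_one _
  have e : ((m.toNat : ℤ)) = m := Int.toNat_of_nonneg (by exact_mod_cast h0)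
  have e' : ((m.toNat : ℕ) : ℝ) = (m : ℝ) := by exact_mod_cast congrArg Int.cast e
  refine ⟨m.toNat, ?_, ?_⟩
  · have : (m.toNat : ℝ) < v := by rw [e']; exact h1
    exact_mod_cast this
  · rw [eq_div_iff (ne_of_gt hv'), e', hm']; ring


theorem stmt_3 (v k : ℕ) (hv : 1 ≤ v)
    (Λ : AddSubgroup (Fin (v*(k+1)) → AddCircle (1:ℝ)))
    (hfin : (Λ : Set (Fin (v*(k+1)) → AddCircle (1:ℝ))).Finite)
    (hΛ : HasDeltaPoly v (k+1) (Λ : Set (Fin (v*(k+1)) → AddCircle (1:ℝ)))) :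
    Λ = AddSubgroup.zmultiples
      (fun _ : Fin (v*(k+1)) => ((1 / (v:ℝ) : ℝ) : AddCircle (1:ℝ))) := by
  classical
  obtain ⟨hmaps, hinj, hsurj⟩ := hΛ
  set g : Fin (v*(k+1)) → AddCircle (1:ℝ) :=
    (fun _ => ((1 / (v:ℝ) : ℝ) : AddCircle (1:ℝ))) with hgdef
  set C : ℝ := ((k+1 : ℕ) : ℝ) with hC
  have hC0 : 0 < C := by positivity
  set T : Set ℝ := {y : ℝ | ∃ j : ℕ, j < v ∧ y = (j : ℝ) * C} with hT
  -- height of zero is zero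
  have ht_zero : ht (0 : Fin (v*(k+1)) → AddCircle (1:ℝ)) = 0 := by
    unfold ht; simp [fracR_zero]
  have ht_nonneg : ∀ x : Fin (v*(k+1)) → AddCircle (1:ℝ), 0 ≤ ht x :=
    fun x => Finset.sum_nonneg fun i _ => fracR_nonneg _
  have ht_eq_zero : ∀ x : Fin (v*(k+1)) → AddCircle (1:ℝ), ht x = 0 → x = 0 := by
    intro x hx
    have := (Finset.sum_eq_zero_iff_of_nonneg
      (fun i _ => fracR_nonneg (x i))).mp hx
    funext i
    exact (fracR_eq_zero_iff (x i)).mp (this i (Finset.mem_univ i))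
  rcases eq_or_lt_of_le hv with hv1 | hv2
  · -- v = 1 : Λ = {0} and g = 0
    have hg0 : g = 0 := by
      funext i
      rw [hgdef]
      simp only [← hv1, Nat.cast_one, div_one]
      exact AddCircle.coe_period 1
    have hΛbot : ∀ x ∈ Λ, x = 0 := by
      intro x hx
      obtain ⟨j, hj, hjx⟩ := hmaps hx
      have hj0 : j = 0 := Nat.lt_one_iff.mp (hv1 ▸ hj)
      subst hj0
      exact ht_eq_zero x (by rw [hjx]; simp)
    apply le_antisymm
    · intro x hx
      rw [hΛbot x hx]
      exact zero_mem _
    · rw [hg0]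
      intro x hx
      obtain ⟨m, hm⟩ := AddSubgroup.mem_zmultiples_iff.mp hx
      rw [← hm, smul_zero]; exact zero_mem Λ
  · -- v ≥ 2
    set F : Finset (Fin (v*(k+1)) → AddCircle (1:ℝ)) := hfin.toFinset with hF
    have hmemF : ∀ x, x ∈ F ↔ x ∈ Λ := fun x => Set.Finite.mem_toFinset hfin
    have h0F : (0 : Fin (v*(k+1)) → AddCircle (1:ℝ)) ∈ F := (hmemF 0).mpr (zero_mem Λ)
    -- sum of heights over Λ
    have hinjC : Set.InjOn (fun j : ℕ => (j : ℝ) * C) ↑(Finset.range v) := by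
      intro a _ b _ hab
      have : (a : ℝ) = b := mul_right_cancel₀ (ne_of_gt hC0) hab
      exact_mod_cast this
    set Tf : Finset ℝ := (Finset.range v).image (fun j : ℕ => (j:ℝ)*C) with hTf
    have hTfin : ∀ y : ℝ, y ∈ Tf ↔ y ∈ T := by
      intro y
      simp only [hTf, Finset.mem_image, Finset.mem_range, hT, Set.mem_setOf_eq]
      constructor
      · rintro ⟨j, hj, rfl⟩; exact ⟨j, hj, rfl⟩
      · rintro ⟨j, hj, rfl⟩; exact ⟨j, hj, rfl⟩
    have himg : ∑ y ∈ Tf, y = ∑ j ∈ Finset.range v, (j : ℝ) * C :=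
      Finset.sum_image (fun x hx y hy => hinjC hx hy)
    have hsum : ∑ x ∈ F, ht x = ∑ j ∈ Finset.range v, (j : ℝ) * C := by
      rw [← himg]
      refine Finset.sum_bij (fun a _ => ht a) ?_ ?_ ?_ ?_
      · intro a ha; rw [hTfin]; exact hmaps ((hmemF a).mp ha)
      · intro a ha b hb hab; exact hinj ((hmemF a).mp ha) ((hmemF b).mp hb) hab
      · intro y hy
        obtain ⟨a, haΛ, hay⟩ := hsurj ((hTfin y).mp hy)
        exact ⟨a, (hmemF a).mpr haΛ, hay⟩
      · intro a ha; rfl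
    -- cardinality of Λ is v
    have hcard : F.card = v := by
      have h1 : F.card = Tf.card := by
        refine Finset.card_bij (fun a _ => ht a) ?_ ?_ ?_
        · intro a ha; rw [hTfin]; exact hmaps ((hmemF a).mp ha)
        · intro a ha b hb hab; exact hinj ((hmemF a).mp ha) ((hmemF b).mp hb) hab
        · intro y hy
          obtain ⟨a, haΛ, hay⟩ := hsurj ((hTfin y).mp hy)
          exact ⟨a, (hmemF a).mpr haΛ, hay⟩
      rw [h1, hTf, Finset.card_image_of_injOn hinjC, Finset.card_range]
    -- torsion
    have hncard : Nat.card Λ = v := by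
      rw [show (Nat.card Λ) = Nat.card (Λ : Set (Fin (v*(k+1)) → AddCircle (1:ℝ))) from rfl,
        Nat.card_eq_card_finite_toFinset hfin, ← hF, hcard]
    have htor : ∀ x ∈ Λ, ∀ i, (v : ℕ) • (x i) = 0 := by
      intro x hx i
      have h := card_nsmul_eq_zero' (x := (⟨x, hx⟩ : Λ))
      rw [hncard] at h
      have h2 : v • x = 0 := by
        have := congrArg (Subtype.val) h
        exact this
      calc (v : ℕ) • (x i) = (v • x) i := rfl
        _ = 0 := by rw [h2]; rfl
    have hcoord : ∀ x ∈ Λ, ∀ i, ∃ a : ℕ, a < v ∧ fracR (x i) = (a : ℝ) / v := by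
      intro x hx i
      exact exists_nat_of_nsmul_eq_zero (lt_of_lt_of_le one_pos hv) _ (htor x hx i)
    -- every nonzero element of Λ has all coordinates nonzero
    have hpt : ∀ x : Fin (v*(k+1)) → AddCircle (1:ℝ),
        ht x + ht (-x) = ∑ i, (if x i = 0 then (0:ℝ) else 1) := by
      intro x
      unfold ht
      rw [← Finset.sum_add_distrib]
      refine Finset.sum_congr rfl fun i _ => ?_
      have hni : (-x) i = -(x i) := rfl
      rw [hni, fracR_add_neg]
    have hle : ∀ x ∈ F, ht x + ht (-x) ≤ (if x = 0 then (0:ℝ) else ((v*(k+1):ℕ):ℝ)) := by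
      intro x _
      rw [hpt]
      by_cases h : x = 0
      · simp [h, fracR_zero]
      · rw [if_neg h]
        calc ∑ i, (if x i = 0 then (0:ℝ) else 1)
            ≤ ∑ _i : Fin (v*(k+1)), (1:ℝ) := by
              refine Finset.sum_le_sum fun i _ => ?_
              split <;> norm_num
          _ = ((v*(k+1):ℕ) : ℝ) := by simp
    have key : ∀ x ∈ F, ht x + ht (-x) = (if x = 0 then (0:ℝ) else ((v*(k+1):ℕ):ℝ)) := by
      have hneg : ∑ x ∈ F, ht (-x) = ∑ x ∈ F, ht x := by
        refine Finset.sum_nbij' (fun x => -x) (fun x => -x) ?_ ?_ ?_ ?_ ?_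
        · intro a ha; exact (hmemF _).mpr (neg_mem ((hmemF a).mp ha))
        · intro a ha; exact (hmemF _).mpr (neg_mem ((hmemF a).mp ha))
        · intro a _; simp
        · intro a _; simp
        · intro a _; rfl
      have lhs : ∑ x ∈ F, (ht x + ht (-x)) = 2 * ∑ x ∈ F, ht x := by
        rw [Finset.sum_add_distrib, hneg]; ring
      have rhs : ∑ x ∈ F, (if x = 0 then (0:ℝ) else ((v*(k+1):ℕ):ℝ))
          = ((v-1:ℕ):ℝ) * ((v*(k+1):ℕ):ℝ) := by
        rw [← Finset.add_sum_erase F _ h0F, if_pos rfl, zero_add,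
          Finset.sum_congr rfl (fun x hx => if_neg (Finset.ne_of_mem_erase hx)),
          Finset.sum_const, Finset.card_erase_of_mem h0F, hcard, nsmul_eq_mul]
      have gauss : 2 * ∑ j ∈ Finset.range v, (j:ℝ) * C
          = ((v-1:ℕ):ℝ) * ((v*(k+1):ℕ):ℝ) := by
        have h2 : ((∑ i ∈ Finset.range v, (i:ℕ)) * 2 : ℕ) = v * (v - 1) :=
          Finset.sum_range_id_mul_two v
        have h5 := congrArg (Nat.cast : ℕ → ℝ) h2
        push_cast [Nat.cast_sub hv] at h5
        rw [← Finset.sum_mul, Nat.cast_sub hv, hC]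
        push_cast
        nlinarith [h5]
      have hsum2 : ∑ x ∈ F, (ht x + ht (-x))
          = ∑ x ∈ F, (if x = 0 then (0:ℝ) else ((v*(k+1):ℕ):ℝ)) := by
        rw [lhs, hsum, rhs, gauss]
      exact fun x hx => (Finset.sum_eq_sum_iff_of_le hle).mp hsum2 x hx
    have hnonzero : ∀ x ∈ Λ, x ≠ 0 → ∀ i, x i ≠ 0 := by
      intro x hxΛ hx0 i
      have hk := key x ((hmemF x).mpr hxΛ)
      rw [hpt, if_neg hx0] at hk
      have hterm : ∀ j ∈ Finset.univ, (if x j = 0 then (0:ℝ) else 1) = 1 := by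
        have hcardu : ∑ _j : Fin (v*(k+1)), (1:ℝ) = ((v*(k+1):ℕ):ℝ) := by simp
        have hle1 : ∀ j ∈ (Finset.univ : Finset (Fin (v*(k+1)))),
            (if x j = 0 then (0:ℝ) else 1) ≤ 1 := fun j _ => by split <;> norm_num
        exact (Finset.sum_eq_sum_iff_of_le hle1).mp (by rw [hk, hcardu])
      intro h
      have := hterm i (Finset.mem_univ i)
      rw [if_pos h] at this
      norm_num at this
    -- the element of height C is g, so g ∈ Λ
    have hv0 : (0:ℝ) < v := by exact_mod_cast lt_of_lt_of_le one_pos hv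
    have hgΛ : g ∈ Λ := by
      have h1v : (1:ℝ)*C ∈ T := ⟨1, hv2, by norm_num⟩
      obtain ⟨x1, hx1Λ, hx1⟩ := hsurj h1v
      have hx10 : x1 ≠ 0 := by
        intro h
        rw [h, ht_zero] at hx1
        have : (1:ℝ)*C = 0 := hx1.symm
        rw [one_mul] at this
        exact absurd this (ne_of_gt hC0)
      choose a ha hfa using fun i => hcoord x1 hx1Λ i
      have ha1 : ∀ i, 1 ≤ a i := by
        intro i
        rcases Nat.eq_zero_or_pos (a i) with h | h
        · exfalso
          have h0 : fracR (x1 i) = 0 := by rw [hfa i, h]; simp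
          exact hnonzero x1 hx1Λ hx10 i ((fracR_eq_zero_iff _).mp h0)
        · exact h
      have hsum1 : ∑ i, ((a i : ℝ)/v) = (1:ℝ)*C := by
        rw [← hx1]
        unfold ht
        exact Finset.sum_congr rfl fun i _ => (hfa i).symm
      have hsa : (∑ i, (a i : ℝ)) = (v:ℝ) * C := by
        rw [← Finset.sum_div, div_eq_iff (ne_of_gt hv0), one_mul] at hsum1
        linarith [hsum1]
      have hsaN : (∑ i, a i) = v*(k+1) := by
        rw [hC] at hsa
        have hcast : ((∑ i, a i : ℕ) : ℝ) = ((v*(k+1):ℕ):ℝ) := by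
          push_cast
          push_cast at hsa
          linarith [hsa]
        exact_mod_cast hcast
      have hall : ∀ i, a i = 1 := by
        have hcardu : ∑ _i : Fin (v*(k+1)), 1 = v*(k+1) := by simp
        have h := (Finset.sum_eq_sum_iff_of_le
          (fun i _ => ha1 i)).mp (by rw [hcardu, hsaN])
        intro i
        exact (h i (Finset.mem_univ i)).symm
      have hx1g : x1 = g := by
        funext i
        rw [← coe_fracR (x1 i), hfa i, hall i]
        rw [hgdef]
        norm_num
      rwa [← hx1g]
    -- heights of multiples of g
    have hht_g : ∀ j : ℕ, j < v → ht (j • g) = (j : ℝ) * C := by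
      intro j hj
      have hji : ∀ i, (j • g) i = (((j:ℝ)/v : ℝ) : AddCircle (1:ℝ)) := by
        intro i
        have h1 : (j • g) i = j • (g i) := rfl
        rw [h1, hgdef]
        rw [← AddCircle.coe_nsmul]
        congr 1
        rw [nsmul_eq_mul]
        field_simp
      unfold ht
      rw [Finset.sum_congr rfl fun i _ => by
        rw [hji i, fracR_coe_of (by positivity)
          (by rw [div_lt_one hv0]; exact_mod_cast hj)]]
      rw [Finset.sum_const, Finset.card_univ, Fintype.card_fin, nsmul_eq_mul]
      rw [hC]
      push_cast
      field_simp
    apply le_antisymm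
    · intro x hx
      obtain ⟨j, hj, hjx⟩ := hmaps hx
      have hjg : j • g ∈ Λ := AddSubgroup.nsmul_mem Λ hgΛ j
      have : x = j • g := hinj hx hjg (by rw [hjx, hht_g j hj])
      rw [this]
      exact AddSubgroup.mem_zmultiples_iff.mpr ⟨(j : ℤ), by rw [natCast_zsmul]⟩
    · exact AddSubgroup.zmultiples_le.mpr hgΛ
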